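/- In an intra-regular LA-semihypergroup H with pure left identity, a nonempty subset A is a two-sided hyperideal of H if and only if A is a (1,2)-hyperideal of H. -/
import Mathlib


open Set

/-- Elementwise extension of a hyperoperation to subsets:
`hmul op A B = ⋃_{a∈A, b∈B} op a b`. -/
def hmul {H : Type*} (op : H → H → Set H) (A B : Set H) : Set H :=
  ⋃ a ∈ A, ⋃ b ∈ B, op a b

section Aux

variable {H : Type*} {op : H → H → Set H}

lemma mem_hmul {A B : Set H} {z : H} :
    z ∈ hmul op A B ↔ ∃ a ∈ A, ∃ b ∈ B, z ∈ op a b := by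
  simp [hmul]

lemma hmul_mono {A B C D : Set H} (h1 : A ⊆ C) (h2 : B ⊆ D) :
    hmul op A B ⊆ hmul op C D := by
  intro z hz
  rw [mem_hmul] at hz ⊢
  obtain ⟨a, ha, b, hb, hz⟩ := hz
  exact ⟨a, h1 ha, b, h2 hb, hz⟩

lemma hmul_singleton (a b : H) : hmul op {a} {b} = op a b := by
  simp [hmul]

/-- Set-level left invertive law. -/
lemma hmul_inv (hLA : ∀ x y z : H, hmul op (op x y) {z} = hmul op (op z y) {x})
    (P Q R : Set H) :
    hmul op (hmul op P Q) R = hmul op (hmul op R Q) P := by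
  have key : ∀ P Q R : Set H, ∀ z : H,
      z ∈ hmul op (hmul op P Q) R ↔
        ∃ p ∈ P, ∃ q ∈ Q, ∃ r ∈ R, z ∈ hmul op (op p q) {r} := by
    intro P Q R z
    constructor
    · intro hz
      rw [mem_hmul] at hz
      obtain ⟨u, hu, r, hr, hz⟩ := hz
      rw [mem_hmul] at hu
      obtain ⟨p, hp, q, hq, hu⟩ := hu
      exact ⟨p, hp, q, hq, r, hr, mem_hmul.2 ⟨u, hu, r, rfl, hz⟩⟩
    · rintro ⟨p, hp, q, hq, r, hr, hz⟩
      rw [mem_hmul] at hz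
      obtain ⟨u, hu, r', hr', hz⟩ := hz
      rw [mem_singleton_iff] at hr'
      subst hr'
      exact mem_hmul.2 ⟨u, mem_hmul.2 ⟨p, hp, q, hq, hu⟩, _, hr, hz⟩
  ext z
  rw [key, key]
  constructor
  · rintro ⟨p, hp, q, hq, r, hr, hz⟩
    exact ⟨r, hr, q, hq, p, hp, (hLA p q r) ▸ hz⟩
  · rintro ⟨r, hr, q, hq, p, hp, hz⟩
    exact ⟨p, hp, q, hq, r, hr, (hLA p q r).symm ▸ hz⟩

/-- Set-level medial law, derived from the invertive law. -/
lemma hmul_med (hLA : ∀ x y z : H, hmul op (op x y) {z} = hmul op (op z y) {x})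
    (P Q R S : Set H) :
    hmul op (hmul op P Q) (hmul op R S) = hmul op (hmul op P R) (hmul op Q S) := by
  rw [hmul_inv hLA P Q (hmul op R S), hmul_inv hLA R S Q,
    hmul_inv hLA (hmul op Q S) R P]

lemma hmul_e {e : H} (he : ∀ a : H, op e a = {a}) (P : Set H) :
    hmul op {e} P = P := by
  ext z
  rw [mem_hmul]
  constructor
  · rintro ⟨a, rfl, b, hb, hz⟩
    rw [he b, mem_singleton_iff] at hz
    subst hz
    exact hb
  · intro hz
    exact ⟨e, rfl, z, hz, by rw [he]; exact rfl⟩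

/-- Set-level law `x(yz) = y(xz)`. -/
lemma hmul_L (hLA : ∀ x y z : H, hmul op (op x y) {z} = hmul op (op z y) {x})
    {e : H} (he : ∀ a : H, op e a = {a}) (X Q R : Set H) :
    hmul op X (hmul op Q R) = hmul op Q (hmul op X R) := by
  conv_lhs => rw [← hmul_e he X, hmul_med hLA {e} X Q R, hmul_e he Q]

/-- Set-level paramedial law. -/
lemma hmul_pm (hLA : ∀ x y z : H, hmul op (op x y) {z} = hmul op (op z y) {x})
    {e : H} (he : ∀ a : H, op e a = {a}) (P Q R S : Set H) :
    hmul op (hmul op P Q) (hmul op R S) = hmul op (hmul op S R) (hmul op Q P) := by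
  rw [hmul_L hLA he (hmul op P Q) R S, hmul_inv hLA P Q S,
    hmul_L hLA he R (hmul op S Q) P, hmul_med hLA S Q R P]

end Aux

theorem stmt19 {H : Type*} (op : H → H → Set H)
    (hne : ∀ a b : H, (op a b).Nonempty)
    (hLA : ∀ x y z : H, hmul op (op x y) {z} = hmul op (op z y) {x})
    (e : H) (he : ∀ a : H, op e a = {a})
    (hir : ∀ a : H, ∃ x y : H, a ∈ hmul op (hmul op {x} (op a a)) {y}) :
    ∀ A : Set H, A.Nonempty →
      ((hmul op Set.univ A ⊆ A ∧ hmul op A Set.univ ⊆ A) ↔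
        (hmul op A A ⊆ A ∧
          hmul op (hmul op A Set.univ) (hmul op A A) ⊆ A)) := by
  intro A _hA
  constructor
  · rintro ⟨h1, h2⟩
    refine ⟨(hmul_mono (subset_univ A) subset_rfl).trans h1, ?_⟩
    exact (hmul_mono (subset_univ _)
      ((hmul_mono (subset_univ A) subset_rfl).trans h1)).trans h1
  · rintro ⟨hAA, h12⟩
    -- `a∘a ⊆ A` for `a ∈ A`
    have haaA : ∀ a ∈ A, op a a ⊆ A := by
      intro a ha
      rw [← hmul_singleton (op := op) a a]
      exact (hmul_mono (singleton_subset_iff.2 ha) (singleton_subset_iff.2 ha)).trans hAA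
    -- key lemma: `s∘a ⊆ (a∘a)∘H` for every `s a`
    have HA' : ∀ s a : H, op s a ⊆ hmul op (op a a) univ := by
      intro s a
      obtain ⟨x, y, hxy⟩ := hir a
      calc op s a = hmul op {s} {a} := (hmul_singleton s a).symm
        _ ⊆ hmul op {s} (hmul op (hmul op {x} (op a a)) {y}) :=
            hmul_mono subset_rfl (singleton_subset_iff.2 hxy)
        _ = hmul op (hmul op {x} (op a a)) (hmul op {s} {y}) :=
            hmul_L hLA he {s} (hmul op {x} (op a a)) {y}
        _ = hmul op (hmul op {y} {s}) (hmul op (op a a) {x}) :=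
            hmul_pm hLA he {x} (op a a) {s} {y}
        _ = hmul op (op a a) (hmul op (hmul op {y} {s}) {x}) :=
            hmul_L hLA he (hmul op {y} {s}) (op a a) {x}
        _ ⊆ hmul op (op a a) univ := hmul_mono subset_rfl (subset_univ _)
    -- `A∘H` is closed under left multiplication by anything
    have C2 : hmul op univ (hmul op A univ) ⊆ hmul op A univ := by
      intro z hz
      rw [mem_hmul] at hz
      obtain ⟨h, -, q, hq, hz⟩ := hz
      rw [mem_hmul] at hq
      obtain ⟨a', ha', t, -, hq⟩ := hq
      have : z ∈ hmul op {h} (hmul op {a'} {t}) := by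
        rw [hmul_singleton]
        exact mem_hmul.2 ⟨h, rfl, q, hq, hz⟩
      rw [hmul_L hLA he {h} {a'} {t}] at this
      exact hmul_mono (singleton_subset_iff.2 ha') (subset_univ _) this
    -- `A∘H` is closed under right multiplication by anything
    have C3 : hmul op (hmul op A univ) univ ⊆ hmul op A univ := by
      intro z hz
      rw [mem_hmul] at hz
      obtain ⟨p, hp, v, -, hz⟩ := hz
      rw [mem_hmul] at hp
      obtain ⟨a', ha', t, -, hp⟩ := hp
      have h1 : z ∈ hmul op (hmul op {a'} {t}) {v} := by
        rw [mem_hmul]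
        exact ⟨p, by rw [hmul_singleton]; exact hp, v, rfl, hz⟩
      rw [hmul_inv hLA {a'} {t} {v}] at h1
      rw [mem_hmul] at h1
      obtain ⟨w, -, a'', ha'', h1⟩ := h1
      rcases ha'' with rfl
      exact (hmul_mono (haaA a'' ha') subset_rfl) (HA' w a'' h1)
    -- main: `a∘t ⊆ A` for `a ∈ A`
    have main : ∀ a ∈ A, ∀ t : H, op a t ⊆ A := by
      intro a ha t
      obtain ⟨x, y, hxy⟩ := hir a
      have key : op a t ⊆
          hmul op (hmul op (hmul op {x} (op y a)) univ) (op a a) := by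
        calc op a t = hmul op {a} {t} := (hmul_singleton a t).symm
          _ ⊆ hmul op (hmul op (hmul op {x} (op a a)) {y}) {t} :=
              hmul_mono (singleton_subset_iff.2 hxy) subset_rfl
          _ = hmul op (hmul op {t} {y}) (hmul op {x} (op a a)) :=
              hmul_inv hLA (hmul op {x} (op a a)) {y} {t}
          _ = hmul op {x} (hmul op (hmul op {t} {y}) (op a a)) :=
              hmul_L hLA he (hmul op {t} {y}) {x} (op a a)
          _ = hmul op {x} (hmul op (hmul op {t} {a}) (hmul op {y} {a})) := by
              rw [← hmul_singleton (op := op) a a, hmul_med hLA {t} {y} {a} {a}]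
          _ = hmul op (hmul op {t} {a}) (hmul op {x} (hmul op {y} {a})) :=
              hmul_L hLA he {x} (hmul op {t} {a}) (hmul op {y} {a})
          _ = hmul op (op t a) (hmul op {x} (op y a)) := by
              rw [hmul_singleton t a, hmul_singleton y a]
          _ ⊆ hmul op (hmul op (op a a) univ) (hmul op {x} (op y a)) :=
              hmul_mono (HA' t a) subset_rfl
          _ = hmul op (hmul op (hmul op {x} (op y a)) univ) (op a a) :=
              hmul_inv hLA (op a a) univ (hmul op {x} (op y a))
      have hZ : hmul op {x} (op y a) ⊆ hmul op A univ := by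
        refine subset_trans ?_ C2
        exact hmul_mono (subset_univ _)
          ((HA' y a).trans (hmul_mono (haaA a ha) subset_rfl))
      have hF : hmul op (hmul op {x} (op y a)) univ ⊆ hmul op A univ :=
        (hmul_mono hZ subset_rfl).trans C3
      have hG : op a a ⊆ hmul op A A := by
        rw [← hmul_singleton (op := op) a a]
        exact hmul_mono (singleton_subset_iff.2 ha) (singleton_subset_iff.2 ha)
      exact key.trans ((hmul_mono hF hG).trans h12)
    constructor
    · intro z hz
      rw [mem_hmul] at hz
      obtain ⟨s, -, a, ha, hz⟩ := hz
      have h1 := HA' s a hz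
      have h2 := hmul_mono (haaA a ha) subset_rfl h1
      rw [mem_hmul] at h2
      obtain ⟨a', ha', t, -, h2⟩ := h2
      exact main a' ha' t h2
    · intro z hz
      rw [mem_hmul] at hz
      obtain ⟨a, ha, t, -, hz⟩ := hz
      exact main a ha t hz
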